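/- In a quadratic network game with heterogeneous shock conjectures satisfying ‖ε^{(i)} - ε^{(j)}‖₂ ≤ δ for all i, j, the game-to-real gap for player i is bounded: J_i(u°) - J_i(u^{(i)}) ≤ (δ ‖ε^{(i)}‖₂ Σ_{j≠i} ‖P_{i,j}‖₂) / σ_min(I-P)². -/

import Mathlib

open Matrix BigOperators

namespace GameToReal

/-- Total index set: player `i` owns coordinates `Fin (m i)`. -/
abbrev Idx {ι : Type*} (m : ι → ℕ) := (i : ι) × Fin (m i)

variable {ι : Type*} [Fintype ι] [DecidableEq ι] {m : ι → ℕ}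

/-- Cost of player `i` in a quadratic network game:
`J_i(u) = (1/2)‖u_i‖² - u_iᵀ (P_{i,-} u + ε_i)`. -/
noncomputable def J (P : Matrix (Idx m) (Idx m) ℝ) (ε : Idx m → ℝ) (i : ι)
    (u : Idx m → ℝ) : ℝ :=
  (1 / 2) * ∑ k : Fin (m i), (u ⟨i, k⟩) ^ 2
    - ∑ k : Fin (m i), u ⟨i, k⟩ * (P.mulVec u ⟨i, k⟩ + ε ⟨i, k⟩)

/-- The `i`-th block row `P_{i,-}` of a block matrix. -/
def blockRow (P : Matrix (Idx m) (Idx m) ℝ) (i : ι) : Matrix (Fin (m i)) (Idx m) ℝ :=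
  Matrix.of fun k x => P ⟨i, k⟩ x

/-- The `(i,j)` block `P_{i,j}` of a block matrix. -/
def block (P : Matrix (Idx m) (Idx m) ℝ) (i j : ι) : Matrix (Fin (m i)) (Fin (m j)) ℝ :=
  Matrix.of fun k l => P ⟨i, k⟩ ⟨j, l⟩

/-- Euclidean norm of a finitely supported real vector. -/
noncomputable def enorm {a : Type*} [Fintype a] (x : a → ℝ) : ℝ :=
  Real.sqrt (∑ k, x k ^ 2)

/-- Spectral norm (operator 2-norm) of a real matrix. -/
noncomputable def specNorm {a b : Type*} [Fintype a] [Fintype b] (A : Matrix a b ℝ) : ℝ :=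
  sSup {r | ∃ x : b → ℝ, enorm x = 1 ∧ r = enorm (A.mulVec x)}

/-- Smallest singular value `σ_min(A) = min_{‖x‖=1} ‖Ax‖`. -/
noncomputable def sigmaMin {a b : Type*} [Fintype a] [Fintype b] (A : Matrix a b ℝ) : ℝ :=
  sInf {r | ∃ x : b → ℝ, enorm x = 1 ∧ r = enorm (A.mulVec x)}

section Helpers

variable {a b : Type*} [Fintype a] [Fintype b]

lemma enorm_nonneg (x : a → ℝ) : 0 ≤ enorm x := Real.sqrt_nonneg _

lemma enorm_zero : enorm (0 : a → ℝ) = 0 := by simp [enorm]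

lemma eq_zero_of_enorm {x : a → ℝ} (h : enorm x = 0) : x = 0 := by
  have hs0 : 0 ≤ ∑ k, x k ^ 2 := Finset.sum_nonneg fun k _ => sq_nonneg _
  have hs : ∑ k, x k ^ 2 = 0 := by
    have hle : ∑ k, x k ^ 2 ≤ 0 := Real.sqrt_eq_zero'.mp h
    linarith
  funext k
  have := (Finset.sum_eq_zero_iff_of_nonneg (fun k _ => sq_nonneg (x k))).mp hs k
    (Finset.mem_univ k)
  simpa using (pow_eq_zero_iff (two_ne_zero)).mp this

lemma enorm_smul (c : ℝ) (x : a → ℝ) : enorm (c • x) = |c| * enorm x := by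
  simp only [enorm, Pi.smul_apply, smul_eq_mul, mul_pow]
  rw [← Finset.mul_sum, Real.sqrt_mul (sq_nonneg c), Real.sqrt_sq_eq_abs]

lemma sum_mul_le_enorm (x y : a → ℝ) : ∑ k, x k * y k ≤ enorm x * enorm y :=
  Real.sum_mul_le_sqrt_mul_sqrt _ _ _

lemma enorm_mulVec_le_frob (A : Matrix a b ℝ) (x : b → ℝ) :
    enorm (A.mulVec x) ≤ Real.sqrt (∑ i, ∑ j, A i j ^ 2) * enorm x := by
  rw [enorm, enorm, ← Real.sqrt_mul (by positivity)]
  apply Real.sqrt_le_sqrt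
  rw [Finset.sum_mul]
  apply Finset.sum_le_sum
  intro i _
  have h : A.mulVec x i = ∑ j, A i j * x j := rfl
  rw [h]
  exact Finset.sum_mul_sq_le_sq_mul_sq _ _ _

lemma specNorm_nonneg (A : Matrix a b ℝ) : 0 ≤ specNorm A :=
  Real.sSup_nonneg (by rintro r ⟨x, -, rfl⟩; exact enorm_nonneg _)

lemma bddAbove_spec (A : Matrix a b ℝ) :
    BddAbove {r | ∃ x : b → ℝ, enorm x = 1 ∧ r = enorm (A.mulVec x)} := by
  refine ⟨Real.sqrt (∑ i, ∑ j, A i j ^ 2), ?_⟩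
  rintro r ⟨x, hx, rfl⟩
  have h := enorm_mulVec_le_frob A x
  rwa [hx, mul_one] at h

lemma bddBelow_spec (A : Matrix a b ℝ) :
    BddBelow {r | ∃ x : b → ℝ, enorm x = 1 ∧ r = enorm (A.mulVec x)} :=
  ⟨0, by rintro r ⟨x, -, rfl⟩; exact enorm_nonneg _⟩

lemma enorm_mulVec_le (A : Matrix a b ℝ) (x : b → ℝ) :
    enorm (A.mulVec x) ≤ specNorm A * enorm x := by
  rcases eq_or_ne (enorm x) 0 with h | h
  · simp [eq_zero_of_enorm h, enorm_zero]
  · have hx : 0 < enorm x := (enorm_nonneg x).lt_of_ne' h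
    have hny : enorm ((enorm x)⁻¹ • x) = 1 := by
      rw [enorm_smul, abs_of_pos (inv_pos.2 hx), inv_mul_cancel₀ h]
    have hle : enorm (A.mulVec ((enorm x)⁻¹ • x)) ≤ specNorm A :=
      le_csSup (bddAbove_spec A) ⟨_, hny, rfl⟩
    rw [Matrix.mulVec_smul, enorm_smul, abs_of_pos (inv_pos.2 hx)] at hle
    calc enorm (A.mulVec x) = enorm x * ((enorm x)⁻¹ * enorm (A.mulVec x)) := by
          field_simp
      _ ≤ enorm x * specNorm A := mul_le_mul_of_nonneg_left hle hx.le
      _ = specNorm A * enorm x := mul_comm _ _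

lemma sigmaMin_nonneg (A : Matrix a b ℝ) : 0 ≤ sigmaMin A :=
  Real.sInf_nonneg (by rintro r ⟨x, -, rfl⟩; exact enorm_nonneg _)

lemma sigmaMin_mul_le (A : Matrix a b ℝ) (x : b → ℝ) :
    sigmaMin A * enorm x ≤ enorm (A.mulVec x) := by
  rcases eq_or_ne (enorm x) 0 with h | h
  · rw [h, mul_zero, eq_zero_of_enorm h, Matrix.mulVec_zero, enorm_zero]
  · have hx : 0 < enorm x := (enorm_nonneg x).lt_of_ne' h
    have hny : enorm ((enorm x)⁻¹ • x) = 1 := by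
      rw [enorm_smul, abs_of_pos (inv_pos.2 hx), inv_mul_cancel₀ h]
    have hle : sigmaMin A ≤ enorm (A.mulVec ((enorm x)⁻¹ • x)) :=
      csInf_le (bddBelow_spec A) ⟨_, hny, rfl⟩
    rw [Matrix.mulVec_smul, enorm_smul, abs_of_pos (inv_pos.2 hx)] at hle
    calc sigmaMin A * enorm x ≤ (enorm x)⁻¹ * enorm (A.mulVec x) * enorm x :=
          mul_le_mul_of_nonneg_right hle hx.le
      _ = enorm (A.mulVec x) := by field_simp

lemma sigmaMin_pos {a : Type*} [Fintype a] [DecidableEq a] [Nonempty a] (A : Matrix a a ℝ)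
    (hquad : ∀ x : a → ℝ, x ≠ 0 → 0 < x ⬝ᵥ A.mulVec x) : 0 < sigmaMin A := by
  have henorm_cont : Continuous (enorm : (a → ℝ) → ℝ) :=
    Real.continuous_sqrt.comp (continuous_finset_sum _ fun k _ => (continuous_apply k).pow 2)
  have hmul_cont : Continuous fun x : a → ℝ => A.mulVec x :=
    continuous_pi fun i => continuous_finset_sum _ fun j _ =>
      continuous_const.mul (continuous_apply j)
  set K : Set (a → ℝ) := {x | enorm x = 1} with hK
  have hKc : IsClosed K := isClosed_eq henorm_cont continuous_const
  have hKb : Bornology.IsBounded K := by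
    apply (Metric.isBounded_closedBall (x := (0 : a → ℝ)) (r := 1)).subset
    intro x hx
    rw [Metric.mem_closedBall, dist_zero_right]
    rw [pi_norm_le_iff_of_nonneg zero_le_one]
    intro k
    have hs : ∑ k', x k' ^ 2 = 1 := by
      have h1 : Real.sqrt (∑ k', x k' ^ 2) = 1 := hx
      have h0 : 0 ≤ ∑ k', x k' ^ 2 := Finset.sum_nonneg fun _ _ => sq_nonneg _
      nlinarith [Real.sq_sqrt h0]
    have h2 : x k ^ 2 ≤ 1 := by
      have hle : x k ^ 2 ≤ ∑ k' : a, x k' ^ 2 := Finset.single_le_sum (f := fun k' => x k' ^ 2)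
        (fun _ _ => sq_nonneg _) (Finset.mem_univ k)
      linarith
    simpa [Real.norm_eq_abs] using (sq_le_one_iff_abs_le_one (x k)).mp h2
  have hKcomp : IsCompact K := Metric.isCompact_of_isClosed_isBounded hKc hKb
  have hKne : K.Nonempty := by
    refine ⟨Pi.single (Classical.arbitrary a) 1, ?_⟩
    have : enorm (Pi.single (Classical.arbitrary a) (1 : ℝ)) = 1 := by
      simp [enorm, Pi.single_apply, Finset.sum_ite_eq']
    exact this
  obtain ⟨x₀, hx₀K, hmin⟩ := hKcomp.exists_isMinOn hKne
    ((henorm_cont.comp hmul_cont).continuousOn)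
  have hx₀ne : x₀ ≠ 0 := by
    intro h
    have : enorm x₀ = 1 := hx₀K
    rw [h, enorm_zero] at this
    norm_num at this
  have hfpos : 0 < enorm (A.mulVec x₀) := by
    rcases eq_or_lt_of_le (enorm_nonneg (A.mulVec x₀)) with h | h
    · exfalso
      have h0 : A.mulVec x₀ = 0 := eq_zero_of_enorm h.symm
      have hp := hquad x₀ hx₀ne
      rw [h0, dotProduct_zero] at hp
      exact lt_irrefl _ hp
    · exact h
  refine lt_of_lt_of_le hfpos (le_csInf ⟨enorm (A.mulVec x₀), x₀, hx₀K, rfl⟩ ?_)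
  rintro r ⟨x, hx, rfl⟩
  exact hmin hx

end Helpers

lemma two_matrix_smul {n : Type*} [Fintype n] [DecidableEq n] :
    (2 : Matrix n n ℝ) = (2 : ℝ) • (1 : Matrix n n ℝ) := by
  rw [show (2:ℝ) = 1 + 1 from by norm_num, add_smul, one_smul]
  norm_num

lemma half_smul {n : Type*} [Fintype n] [DecidableEq n] (P : Matrix n n ℝ) :
    (P + Pᵀ) / 2 = (2 : ℝ)⁻¹ • (P + Pᵀ) := by
  have hinv : (2 : Matrix n n ℝ)⁻¹ = (2 : ℝ)⁻¹ • (1 : Matrix n n ℝ) := by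
    apply Matrix.inv_eq_right_inv
    rw [two_matrix_smul, smul_mul_assoc, Matrix.mul_smul, smul_smul, one_mul]
    norm_num
  rw [div_eq_mul_inv, hinv, Matrix.mul_smul, mul_one]

lemma quad_pos {n : Type*} [Fintype n] [DecidableEq n] (P : Matrix n n ℝ)
    (hP : ((1 : Matrix n n ℝ) - (P + Pᵀ) / 2).PosDef)
    (x : n → ℝ) (hx : x ≠ 0) : 0 < x ⬝ᵥ ((1 - P).mulVec x) := by
  have h := hP.dotProduct_mulVec_pos hx
  rw [star_trivial, half_smul] at h
  have ht : x ⬝ᵥ (Pᵀ.mulVec x) = x ⬝ᵥ (P.mulVec x) := by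
    rw [Matrix.mulVec_transpose, Matrix.dotProduct_mulVec (R := ℝ), dotProduct_comm]
  rw [Matrix.sub_mulVec, Matrix.one_mulVec, dotProduct_sub, Matrix.smul_mulVec,
    Matrix.add_mulVec, dotProduct_smul, dotProduct_add, ht, smul_eq_mul] at h
  rw [Matrix.sub_mulVec, Matrix.one_mulVec, dotProduct_sub]
  linarith

lemma enorm_restrict_le (z : Idx m → ℝ) (j : ι) :
    enorm (fun l : Fin (m j) => z ⟨j, l⟩) ≤ enorm z := by
  apply Real.sqrt_le_sqrt
  calc ∑ l : Fin (m j), z ⟨j, l⟩ ^ 2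
      ≤ ∑ j' : ι, ∑ l : Fin (m j'), z ⟨j', l⟩ ^ 2 :=
        Finset.single_le_sum (f := fun j' => ∑ l : Fin (m j'), z ⟨j', l⟩ ^ 2)
          (fun _ _ => Finset.sum_nonneg fun _ _ => sq_nonneg _) (Finset.mem_univ j)
    _ = ∑ x : Idx m, z x ^ 2 := by
        rw [← Finset.univ_sigma_univ, Finset.sum_sigma]

/-- with heterogeneous shock conjectures satisfying
`‖ε⁽ⁱ⁾ - ε⁽ʲ⁾‖₂ ≤ δ` for all `i,j`, the game-to-real gap of player `i` is at most
`δ ‖ε⁽ⁱ⁾‖₂ (∑_{j≠i} ‖P_{i,j}‖₂) / σ_min(I-P)²`. -/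
theorem gap_shock_bound
    (P : Matrix (Idx m) (Idx m) ℝ)
    (hdiag : ∀ (i : ι) (k l : Fin (m i)), P ⟨i, k⟩ ⟨i, l⟩ = 0)
    (hP : ((1 : Matrix (Idx m) (Idx m) ℝ) - (P + Pᵀ) / 2).PosDef)
    (δ : ℝ) (ε : ι → Idx m → ℝ)
    (hδ : ∀ i j : ι, enorm (ε i - ε j) ≤ δ)
    (upred : ι → Idx m → ℝ) (hupred : ∀ j, upred j = (1 - P)⁻¹.mulVec (ε j))
    (ureal : Idx m → ℝ) (hureal : ∀ x : Idx m, ureal x = upred x.1 x)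
    (i : ι) :
    J P (ε i) i ureal - J P (ε i) i (upred i) ≤
      (δ * enorm (ε i) * ∑ j ∈ Finset.univ.erase i, specNorm (block P i j)) /
        (sigmaMin ((1 : Matrix (Idx m) (Idx m) ℝ) - P)) ^ 2 := by
  by_cases hne : Nonempty (Idx m)
  case neg =>
    haveI : IsEmpty (Idx m) := not_nonempty_iff.mp hne
    haveI : IsEmpty (Fin (m i)) := ⟨fun k => hne ⟨⟨i, k⟩⟩⟩
    have hset : {r | ∃ x : Idx m → ℝ, enorm x = 1 ∧
        r = enorm (((1 : Matrix (Idx m) (Idx m) ℝ) - P).mulVec x)} = ∅ := by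
      ext r
      simp only [Set.mem_setOf_eq, Set.mem_empty_iff_false, iff_false, not_exists]
      rintro x ⟨hx, -⟩
      simp [enorm, Finset.univ_eq_empty] at hx
    have hσ0 : sigmaMin ((1 : Matrix (Idx m) (Idx m) ℝ) - P) = 0 := by
      rw [sigmaMin, hset, Real.sInf_empty]
    rw [hσ0]
    simp [J, Finset.univ_eq_empty]
  case pos =>
    haveI := hne
    set A : Matrix (Idx m) (Idx m) ℝ := (1 : Matrix (Idx m) (Idx m) ℝ) - P with hA
    have hquad : ∀ x : Idx m → ℝ, x ≠ 0 → 0 < x ⬝ᵥ A.mulVec x := fun x hx => quad_pos P hP x hx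
    have hσ : 0 < sigmaMin A := sigmaMin_pos A hquad
    have hdet : A.det ≠ 0 := by
      intro h
      obtain ⟨v, hv, hv0⟩ := (Matrix.exists_mulVec_eq_zero_iff).mpr h
      have hq := hquad v hv
      rw [hv0, dotProduct_zero] at hq
      exact lt_irrefl _ hq
    have hAu : ∀ j, A.mulVec (upred j) = ε j := by
      intro j
      rw [hupred j, Matrix.mulVec_mulVec, Matrix.mul_nonsing_inv _ (isUnit_iff_ne_zero.mpr hdet),
        Matrix.one_mulVec]
    have hδ0 : 0 ≤ δ := by
      have h := hδ i i
      rwa [sub_self, enorm_zero] at h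
    have hvi : enorm (fun k : Fin (m i) => upred i ⟨i, k⟩) ≤ enorm (ε i) / sigmaMin A := by
      refine le_trans (enorm_restrict_le (upred i) i) ?_
      rw [le_div_iff₀ hσ]
      calc enorm (upred i) * sigmaMin A = sigmaMin A * enorm (upred i) := mul_comm _ _
        _ ≤ enorm (A.mulVec (upred i)) := sigmaMin_mul_le A (upred i)
        _ = enorm (ε i) := by rw [hAu i]
    have hdj : ∀ j : ι,
        enorm (fun l : Fin (m j) => upred i ⟨j, l⟩ - upred j ⟨j, l⟩) ≤ δ / sigmaMin A := by
      intro j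
      have h1 : (fun l : Fin (m j) => upred i ⟨j, l⟩ - upred j ⟨j, l⟩)
          = fun l : Fin (m j) => (upred i - upred j) ⟨j, l⟩ := rfl
      rw [h1]
      refine le_trans (enorm_restrict_le (upred i - upred j) j) ?_
      rw [le_div_iff₀ hσ]
      calc enorm (upred i - upred j) * sigmaMin A
          = sigmaMin A * enorm (upred i - upred j) := mul_comm _ _
        _ ≤ enorm (A.mulVec (upred i - upred j)) := sigmaMin_mul_le _ _
        _ = enorm (ε i - ε j) := by rw [Matrix.mulVec_sub, hAu i, hAu j]
        _ ≤ δ := hδ i j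
    have hwv : ∀ k : Fin (m i), ureal ⟨i, k⟩ = upred i ⟨i, k⟩ := fun k => hureal ⟨i, k⟩
    have expand : ∀ (z : Idx m → ℝ) (k : Fin (m i)),
        P.mulVec z ⟨i, k⟩ = ∑ j : ι, ∑ l : Fin (m j), P ⟨i, k⟩ ⟨j, l⟩ * z ⟨j, l⟩ := by
      intro z k
      rw [show P.mulVec z ⟨i, k⟩ = ∑ x : Idx m, P ⟨i, k⟩ x * z x from rfl,
        ← Finset.univ_sigma_univ, Finset.sum_sigma]
    have key : J P (ε i) i ureal - J P (ε i) i (upred i)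
        = ∑ j ∈ Finset.univ.erase i, ∑ k : Fin (m i),
            upred i ⟨i, k⟩ *
              ((block P i j).mulVec (fun l => upred i ⟨j, l⟩ - upred j ⟨j, l⟩)) k := by
      have step1 : J P (ε i) i ureal - J P (ε i) i (upred i)
          = (∑ k : Fin (m i), upred i ⟨i, k⟩ * (P.mulVec (upred i) ⟨i, k⟩ + ε i ⟨i, k⟩))
            - ∑ k : Fin (m i), upred i ⟨i, k⟩ * (P.mulVec ureal ⟨i, k⟩ + ε i ⟨i, k⟩) := by
        simp only [J, hwv]
        ring
      have hk : ∀ k : Fin (m i),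
          upred i ⟨i, k⟩ * (P.mulVec (upred i) ⟨i, k⟩ + ε i ⟨i, k⟩)
            - upred i ⟨i, k⟩ * (P.mulVec ureal ⟨i, k⟩ + ε i ⟨i, k⟩)
          = ∑ j : ι, upred i ⟨i, k⟩ *
              ∑ l : Fin (m j), P ⟨i, k⟩ ⟨j, l⟩ * (upred i ⟨j, l⟩ - upred j ⟨j, l⟩) := by
        intro k
        have hdiff : P.mulVec (upred i) ⟨i, k⟩ - P.mulVec ureal ⟨i, k⟩
            = ∑ j : ι, ∑ l : Fin (m j), P ⟨i, k⟩ ⟨j, l⟩ * (upred i ⟨j, l⟩ - upred j ⟨j, l⟩) := by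
          rw [expand, expand, ← Finset.sum_sub_distrib]
          refine Finset.sum_congr rfl fun j _ => ?_
          rw [← Finset.sum_sub_distrib]
          refine Finset.sum_congr rfl fun l _ => ?_
          rw [hureal ⟨j, l⟩]
          ring
        calc upred i ⟨i, k⟩ * (P.mulVec (upred i) ⟨i, k⟩ + ε i ⟨i, k⟩)
              - upred i ⟨i, k⟩ * (P.mulVec ureal ⟨i, k⟩ + ε i ⟨i, k⟩)
            = upred i ⟨i, k⟩ * (P.mulVec (upred i) ⟨i, k⟩ - P.mulVec ureal ⟨i, k⟩) := by ring
          _ = ∑ j : ι, upred i ⟨i, k⟩ *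
                ∑ l : Fin (m j), P ⟨i, k⟩ ⟨j, l⟩ * (upred i ⟨j, l⟩ - upred j ⟨j, l⟩) := by
              rw [hdiff, Finset.mul_sum]
      rw [step1, ← Finset.sum_sub_distrib, Finset.sum_congr rfl fun k _ => hk k,
        Finset.sum_comm]
      have hzero : (∑ k : Fin (m i), upred i ⟨i, k⟩ *
          ∑ l : Fin (m i), P ⟨i, k⟩ ⟨i, l⟩ * (upred i ⟨i, l⟩ - upred i ⟨i, l⟩)) = 0 := by
        simp [hdiag]
      exact (Finset.sum_erase (f := fun j : ι => ∑ k : Fin (m i), upred i ⟨i, k⟩ *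
        ∑ l : Fin (m j), P ⟨i, k⟩ ⟨j, l⟩ * (upred i ⟨j, l⟩ - upred j ⟨j, l⟩))
        Finset.univ hzero).symm
    rw [key]
    calc ∑ j ∈ Finset.univ.erase i, ∑ k : Fin (m i),
            upred i ⟨i, k⟩ *
              ((block P i j).mulVec (fun l => upred i ⟨j, l⟩ - upred j ⟨j, l⟩)) k
        ≤ ∑ j ∈ Finset.univ.erase i,
            (enorm (ε i) / sigmaMin A) * (specNorm (block P i j) * (δ / sigmaMin A)) := by
          apply Finset.sum_le_sum
          intro j _
          calc ∑ k : Fin (m i), upred i ⟨i, k⟩ *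
                  ((block P i j).mulVec (fun l => upred i ⟨j, l⟩ - upred j ⟨j, l⟩)) k
              ≤ enorm (fun k : Fin (m i) => upred i ⟨i, k⟩) *
                  enorm ((block P i j).mulVec (fun l => upred i ⟨j, l⟩ - upred j ⟨j, l⟩)) :=
                sum_mul_le_enorm _ _
            _ ≤ enorm (fun k : Fin (m i) => upred i ⟨i, k⟩) *
                  (specNorm (block P i j) *
                    enorm (fun l : Fin (m j) => upred i ⟨j, l⟩ - upred j ⟨j, l⟩)) :=
                mul_le_mul_of_nonneg_left (enorm_mulVec_le _ _) (enorm_nonneg _)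
            _ ≤ (enorm (ε i) / sigmaMin A) * (specNorm (block P i j) * (δ / sigmaMin A)) := by
                apply mul_le_mul hvi
                  (mul_le_mul_of_nonneg_left (hdj j) (specNorm_nonneg _))
                  (mul_nonneg (specNorm_nonneg _) (enorm_nonneg _))
                  (div_nonneg (enorm_nonneg _) hσ.le)
      _ = (δ * enorm (ε i) * ∑ j ∈ Finset.univ.erase i, specNorm (block P i j)) /
            sigmaMin A ^ 2 := by
          rw [Finset.sum_congr rfl (fun j _ => show
              (enorm (ε i) / sigmaMin A) * (specNorm (block P i j) * (δ / sigmaMin A))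
                = (δ * enorm (ε i) / sigmaMin A ^ 2) * specNorm (block P i j) by
              field_simp), ← Finset.mul_sum, div_mul_eq_mul_div]

end GameToReal
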